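/- Let B(t) and P(t) be square-matrix-valued differentiable functions, and define flows on an invertible matrix W by ∂_x W = B_u W and ∂_α W = P_l W, where B = L^n for L = WΛW⁻¹ and P = q ⊗ r with ∂_x q = B_u q and ∂_x r = -B_uᵀ r. Then, using [A_u, B_u]_l = 0, [A_l, B_l]_u = 0, and the outer product rules M(q⊗r) = (Mq)⊗r, (q⊗r)M = q⊗(Mᵀr), the flows commute on W: ∂_α(B_u W) - ∂_x((q⊗r)_l W) = 0, given that ∂_α B = [(q⊗r)_l, B]. -/

import Mathlib

open Matrix

/-- The upper (including diagonal) triangular part of a matrix. -/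
def upperPart {ι R : Type*} [LinearOrder ι] [CommRing R] (A : Matrix ι ι R) :
    Matrix ι ι R :=
  Matrix.of fun i j => if i ≤ j then A i j else 0

/-- The strictly lower triangular part of a matrix. -/
def lowerPart {ι R : Type*} [LinearOrder ι] [CommRing R] (A : Matrix ι ι R) :
    Matrix ι ι R :=
  Matrix.of fun i j => if j < i then A i j else 0

/-- Entrywise application of a derivation to a matrix. -/
def matDeriv {ι R : Type*} [CommRing R] [Algebra ℝ R]
    (δ : Derivation ℝ R R) (A : Matrix ι ι R) : Matrix ι ι R :=
  A.map δ

section Aux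

set_option linter.unusedSectionVars false

variable {ι R : Type*} [Fintype ι] [LinearOrder ι] [CommRing R] [Algebra ℝ R]

lemma matDeriv_mul (δ : Derivation ℝ R R) (A B : Matrix ι ι R) :
    matDeriv δ (A * B) = matDeriv δ A * B + A * matDeriv δ B := by
  ext i j
  simp only [matDeriv, map_apply, Matrix.add_apply, mul_apply, map_sum, Derivation.leibniz,
    Finset.sum_add_distrib, smul_eq_mul]
  rw [add_comm]
  congr 1 <;> (congr 1; ext k; ring)

lemma matDeriv_upperPart (δ : Derivation ℝ R R) (A : Matrix ι ι R) :
    matDeriv δ (upperPart A) = upperPart (matDeriv δ A) := by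
  ext i j; simp [matDeriv, upperPart, apply_ite δ]

lemma matDeriv_lowerPart (δ : Derivation ℝ R R) (A : Matrix ι ι R) :
    matDeriv δ (lowerPart A) = lowerPart (matDeriv δ A) := by
  ext i j; simp [matDeriv, lowerPart, apply_ite δ]

lemma upperPart_add (A B : Matrix ι ι R) :
    upperPart (A + B) = upperPart A + upperPart B := by
  ext i j; simp [upperPart]; split <;> simp

lemma upperPart_sub (A B : Matrix ι ι R) :
    upperPart (A - B) = upperPart A - upperPart B := by
  ext i j; simp [upperPart]; split <;> simp

lemma lowerPart_add (A B : Matrix ι ι R) :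
    lowerPart (A + B) = lowerPart A + lowerPart B := by
  ext i j; simp [lowerPart]; split <;> simp

lemma lowerPart_sub (A B : Matrix ι ι R) :
    lowerPart (A - B) = lowerPart A - lowerPart B := by
  ext i j; simp [lowerPart]; split <;> simp

lemma parts_add (A : Matrix ι ι R) : upperPart A + lowerPart A = A := by
  ext i j
  rcases le_or_gt i j with h | h
  · simp [upperPart, lowerPart, h, not_lt.2 h]
  · simp [upperPart, lowerPart, h, not_le.2 h]

lemma upperPart_low_mul_low (A B : Matrix ι ι R) :
    upperPart (lowerPart A * lowerPart B) = 0 := by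
  ext i j
  by_cases hij : i ≤ j
  · simp only [upperPart, lowerPart, of_apply, mul_apply, if_pos hij, Matrix.zero_apply]
    apply Finset.sum_eq_zero; intro k _
    by_cases h1 : k < i
    · rw [if_pos h1, if_neg (fun h2 : j < k => absurd (h2.trans h1) (not_lt.2 hij)), mul_zero]
    · rw [if_neg h1, zero_mul]
  · simp [upperPart, hij]

lemma lowerPart_up_mul_up (A B : Matrix ι ι R) :
    lowerPart (upperPart A * upperPart B) = 0 := by
  ext i j
  by_cases hij : j < i
  · simp only [upperPart, lowerPart, of_apply, mul_apply, if_pos hij, Matrix.zero_apply]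
    apply Finset.sum_eq_zero; intro k _
    by_cases h1 : i ≤ k
    · rw [if_pos h1, if_neg (fun h2 : k ≤ j => absurd (h1.trans h2) (not_le.2 hij)), mul_zero]
    · rw [if_neg h1, zero_mul]
  · simp [lowerPart, hij]

lemma matDeriv_vecMulVec (δx : Derivation ℝ R R) (B : Matrix ι ι R) (q r : ι → R)
    (hq : (fun i => δx (q i)) = (upperPart B).mulVec q)
    (hr : (fun i => δx (r i)) = -((upperPart B).transpose.mulVec r)) :
    matDeriv δx (vecMulVec q r)
      = upperPart B * vecMulVec q r - vecMulVec q r * upperPart B := by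
  ext i j
  have hqi := congrFun hq i
  have hrj := congrFun hr j
  simp only [matDeriv, map_apply, vecMulVec_apply, Derivation.leibniz, Matrix.sub_apply, mul_apply]
  rw [hqi, hrj]
  simp [mulVec, dotProduct, Finset.sum_mul, Finset.mul_sum, transpose_apply, vecMulVec_apply]
  ring_nf
  have e : ∀ x, q i * upperPart B x j * r x = q i * r x * upperPart B x j := fun x => by ring
  simp only [e]
  ring

lemma key_identity (B P : Matrix ι ι R) :
    upperPart (lowerPart P * B - B * lowerPart P) + upperPart B * lowerPart P
      - (lowerPart (upperPart B * P - P * upperPart B) + lowerPart P * upperPart B) = 0 := by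
  rw [upperPart_sub, lowerPart_sub]
  have e1 : upperPart (lowerPart P * B) = upperPart (lowerPart P * upperPart B) := by
    rw [show lowerPart P * B = lowerPart P * upperPart B + lowerPart P * lowerPart B from by
      rw [← mul_add, parts_add], upperPart_add, upperPart_low_mul_low, add_zero]
  have e2 : upperPart (B * lowerPart P) = upperPart (upperPart B * lowerPart P) := by
    rw [show B * lowerPart P = upperPart B * lowerPart P + lowerPart B * lowerPart P from by
      rw [← add_mul, parts_add], upperPart_add, upperPart_low_mul_low, add_zero]
  have e3 : lowerPart (upperPart B * P) = lowerPart (upperPart B * lowerPart P) := by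
    rw [show upperPart B * P = upperPart B * upperPart P + upperPart B * lowerPart P from by
      rw [← mul_add, parts_add], lowerPart_add, lowerPart_up_mul_up, zero_add]
  have e4 : lowerPart (P * upperPart B) = lowerPart (lowerPart P * upperPart B) := by
    rw [show P * upperPart B = upperPart P * upperPart B + lowerPart P * upperPart B from by
      rw [← add_mul, parts_add], lowerPart_add, lowerPart_up_mul_up, zero_add]
  rw [e1, e2, e3, e4]
  have p1 := parts_add (lowerPart P * upperPart B)
  have p2 := parts_add (upperPart B * lowerPart P)
  generalize hA : upperPart (lowerPart P * upperPart B) = a at p1 ⊢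
  generalize hBb : lowerPart (lowerPart P * upperPart B) = b at p1 ⊢
  generalize hD : upperPart (upperPart B * lowerPart P) = d at p2 ⊢
  generalize hF : lowerPart (upperPart B * lowerPart P) = f at p2 ⊢
  generalize hC : lowerPart P * upperPart B = c at p1 ⊢
  generalize hE : upperPart B * lowerPart P = e at p2 ⊢
  rw [← p1, ← p2]; abel


end Aux

/-- The squared eigenfunction flow commutes with the hierarchy flow:
given `∂_α B = [(q⊗r)_l, B]`, `∂_x q = B_u q`, `∂_x r = -B_uᵀ r`,
`∂_x W = B_u W` and `∂_α W = (q⊗r)_l W`, one has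
`∂_α(B_u W) - ∂_x((q⊗r)_l W) = 0`, i.e. `[∂_α, ∂_x] W = 0`. -/
theorem squared_eigenfunction_symmetry_commutes {ι R : Type*} [Fintype ι] [LinearOrder ι]
    [CommRing R] [Algebra ℝ R] (δx δα : Derivation ℝ R R)
    (B W : Matrix ι ι R) (q r : ι → R)
    (hB : matDeriv δα B = lowerPart (vecMulVec q r) * B - B * lowerPart (vecMulVec q r))
    (hq : (fun i => δx (q i)) = (upperPart B).mulVec q)
    (hr : (fun i => δx (r i)) = -((upperPart B).transpose.mulVec r))
    (hWx : matDeriv δx W = upperPart B * W)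
    (hWα : matDeriv δα W = lowerPart (vecMulVec q r) * W) :
    matDeriv δα (upperPart B * W) - matDeriv δx (lowerPart (vecMulVec q r) * W) = 0 := by
  rw [matDeriv_mul, matDeriv_mul, hWx, hWα, matDeriv_upperPart, matDeriv_lowerPart, hB,
    matDeriv_vecMulVec δx B q r hq hr]
  have k := key_identity B (vecMulVec q r)
  calc upperPart (lowerPart (vecMulVec q r) * B - B * lowerPart (vecMulVec q r)) * W +
        upperPart B * (lowerPart (vecMulVec q r) * W) -
        (lowerPart (upperPart B * vecMulVec q r - vecMulVec q r * upperPart B) * W +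
          lowerPart (vecMulVec q r) * (upperPart B * W))
      = (upperPart (lowerPart (vecMulVec q r) * B - B * lowerPart (vecMulVec q r)) +
          upperPart B * lowerPart (vecMulVec q r) -
          (lowerPart (upperPart B * vecMulVec q r - vecMulVec q r * upperPart B) +
            lowerPart (vecMulVec q r) * upperPart B)) * W := by
        noncomm_ring
    _ = 0 := by rw [k, zero_mul]
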